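/- arXiv:2004.00731 — 4 statements merged into one kernel-verified Lean document; each statement's English description precedes it below -/
import Mathlib

section
/- Let C be a category with pullbacks and let α : g ⟶ f be a cartesian morphism in the arrow category. Then the induced morphism between the diagonals Δg ⟶ Δf is also cartesian, where for h : X ⟶ Y the diagonal Δh : X ⟶ X ×_Y X is the canonical map. -/
open CategoryTheory Limits

theorem stmt9 {C : Type*} [Category C] [HasPullbacks C] {X' Y' X Y : C}
    (g : X' ⟶ Y') (f : X ⟶ Y) (l : X' ⟶ X) (r : Y' ⟶ Y)
    (h : IsPullback l g f r) :
    IsPullback l (pullback.diagonal g) (pullback.diagonal f)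
      (pullback.map g g f f l l r h.w.symm h.w.symm) := by
  have comm : l ≫ pullback.diagonal f =
      pullback.diagonal g ≫ pullback.map g g f f l l r h.w.symm h.w.symm := by
    ext
    · rw [Category.assoc, Category.assoc, pullback.lift_fst]; simp
    · rw [Category.assoc, Category.assoc, pullback.lift_snd]; simp
  refine ⟨⟨comm⟩, ⟨PullbackCone.IsLimit.mk comm (fun s => s.snd ≫ pullback.fst g g)
    (fun s => ?_) (fun s => ?_) (fun s m hl hs => ?_)⟩⟩
  · simp only [Category.assoc]
    calc s.snd ≫ pullback.fst g g ≫ l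
        = s.snd ≫ pullback.map g g f f l l r h.w.symm h.w.symm ≫ pullback.fst f f := by
          rw [pullback.lift_fst]
      _ = s.fst ≫ pullback.diagonal f ≫ pullback.fst f f := by
          rw [← Category.assoc, ← s.condition, Category.assoc]
      _ = s.fst := by simp
  · have key : s.snd ≫ pullback.fst g g = s.snd ≫ pullback.snd g g := by
      apply h.hom_ext
      · simp only [Category.assoc]
        calc s.snd ≫ pullback.fst g g ≫ l
            = s.snd ≫ pullback.map g g f f l l r h.w.symm h.w.symm ≫ pullback.fst f f := by rw [pullback.lift_fst]
          _ = s.fst ≫ pullback.diagonal f ≫ pullback.fst f f := by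
              rw [← Category.assoc, ← s.condition, Category.assoc]
          _ = s.fst ≫ pullback.diagonal f ≫ pullback.snd f f := by simp
          _ = s.snd ≫ pullback.map g g f f l l r h.w.symm h.w.symm ≫ pullback.snd f f := by
              rw [← Category.assoc, s.condition, Category.assoc]
          _ = s.snd ≫ pullback.snd g g ≫ l := by rw [pullback.lift_snd]
      · simp only [Category.assoc, pullback.condition]
    show (s.snd ≫ pullback.fst g g) ≫ pullback.diagonal g = s.snd
    ext
    · simp
    · simpa using key
  · show m = s.snd ≫ pullback.fst g g
    calc m = m ≫ pullback.diagonal g ≫ pullback.fst g g := by simp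
      _ = s.snd ≫ pullback.fst g g := by rw [← Category.assoc, hs]
end

section
/- Let (L, R) be a factorization system on a category C with terminal object, and suppose L is stable under base change (i.e. (L,R) is a modality). Let P : C ⟶ C denote the reflection sending X to the middle object of the (L,R)-factorization of X ⟶ 1, with unit η_X : X ⟶ P X in L and P X ⟶ 1 in R. Then for any map X ⟶ Y, the factorization X ⟶ Z ⟶ Y with Z = Y ×_{P Y} P X has X ⟶ Z in the 2-out-of-3 closure of L and Z ⟶ Y a base change of P X ⟶ P Y. -/
open CategoryTheory Limits

/-- Orthogonality `f ⊥ g`: unique diagonal fillers. -/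
def Orth {C : Type*} [Category C] {A B X Y : C} (f : A ⟶ B) (g : X ⟶ Y) : Prop :=
  ∀ (u : A ⟶ X) (v : B ⟶ Y), u ≫ g = f ≫ v →
    ∃! d : B ⟶ X, f ≫ d = u ∧ d ≫ g = v

/-- `Wᗮ`. -/
def rOrth {C : Type*} [Category C] (W : MorphismProperty C) : MorphismProperty C :=
  fun _ _ g => ∀ ⦃A B : C⦄ (w : A ⟶ B), W w → Orth w g

/-- `ᗮW`. -/
def lOrth {C : Type*} [Category C] (W : MorphismProperty C) : MorphismProperty C :=
  fun _ _ f => ∀ ⦃X Y : C⦄ (g : X ⟶ Y), W g → Orth f g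

/-- An orthogonal factorization system. -/
structure OFS (C : Type*) [Category C] where
  L : MorphismProperty C
  R : MorphismProperty C
  R_eq : R = rOrth L
  L_eq : L = lOrth R
  fac : ∀ {X Y : C} (f : X ⟶ Y),
    ∃ (Z : C) (l : X ⟶ Z) (r : Z ⟶ Y), L l ∧ R r ∧ l ≫ r = f

/-- The 2-out-of-3 closure of a class of maps. -/
inductive TwoOutOfThree {C : Type*} [Category C] (L : MorphismProperty C) :
    ∀ ⦃X Y : C⦄, (X ⟶ Y) → Prop
  | of {X Y : C} (f : X ⟶ Y) : L f → TwoOutOfThree L f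
  | comp {X Y Z : C} (f : X ⟶ Y) (g : Y ⟶ Z) :
      TwoOutOfThree L f → TwoOutOfThree L g → TwoOutOfThree L (f ≫ g)
  | cancel_left {X Y Z : C} (f : X ⟶ Y) (g : Y ⟶ Z) :
      TwoOutOfThree L f → TwoOutOfThree L (f ≫ g) → TwoOutOfThree L g
  | cancel_right {X Y Z : C} (f : X ⟶ Y) (g : Y ⟶ Z) :
      TwoOutOfThree L g → TwoOutOfThree L (f ≫ g) → TwoOutOfThree L f

theorem stmt13 {C : Type*} [Category C] [HasTerminal C] [HasPullbacks C] (S : OFS C)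
    (hL : ∀ ⦃P X Y Z : C⦄ (fst : P ⟶ X) (snd : P ⟶ Y) (a : X ⟶ Z) (b : Y ⟶ Z),
      IsPullback fst snd a b → S.L b → S.L fst)
    {X Y PX PY : C} (f : X ⟶ Y) (ηX : X ⟶ PX) (ηY : Y ⟶ PY) (Pf : PX ⟶ PY)
    (hηX : S.L ηX) (hηY : S.L ηY)
    (hPX : S.R (terminal.from PX)) (hPY : S.R (terminal.from PY))
    (hnat : f ≫ ηY = ηX ≫ Pf) :
    TwoOutOfThree S.L (pullback.lift f ηX hnat : X ⟶ pullback ηY Pf) ∧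
    IsPullback (pullback.snd ηY Pf) (pullback.fst ηY Pf) Pf ηY := by
  refine ⟨?_, (IsPullback.of_hasPullback ηY Pf).flip⟩
  have h1 : S.L (pullback.snd ηY Pf) :=
    hL _ _ _ _ (IsPullback.of_hasPullback ηY Pf).flip hηY
  exact TwoOutOfThree.cancel_right _ (pullback.snd ηY Pf) (.of _ h1)
    (by rw [pullback.lift_snd]; exact .of _ hηX)
end

section
/- Let (L,R) be a modality on a category C with finite limits and terminal object, with associated reflection P : C ⟶ R₁ into the subcategory of modal objects (those X with X ⟶ 1 in R). Then P is semi-left-exact: P preserves every pullback square whose bottom-right cospan consists of a map in R₁ and a map of the form obtained by pulling back along maps between modal objects; concretely, for any map X ⟶ Y in C, P preserves the pullback of P X ⟶ P Y along Y ⟶ P Y. -/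
open CategoryTheory Limits

/-- Semi-left-exactness of the reflection associated to a modality: `P` preserves the
pullback of `P X ⟶ P Y` along `Y ⟶ P Y`. -/
theorem stmt14 {C : Type*} [Category C] [HasTerminal C] [HasPullbacks C] (S : OFS C)
    (hL : ∀ ⦃P X Y Z : C⦄ (fst : P ⟶ X) (snd : P ⟶ Y) (a : X ⟶ Z) (b : Y ⟶ Z),
      IsPullback fst snd a b → S.L b → S.L fst)
    (P : C ⥤ C) (η : 𝟭 C ⟶ P)
    (hη : ∀ X : C, S.L (η.app X))
    (hR : ∀ X : C, S.R (terminal.from (P.obj X)))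
    (hidem : ∀ X : C, IsIso (η.app (P.obj X)))
    {X Y : C} (f : X ⟶ Y) :
    IsPullback (P.map (pullback.fst (η.app Y) (P.map f)))
      (P.map (pullback.snd (η.app Y) (P.map f)))
      (P.map (η.app Y)) (P.map (P.map f)) := by
  -- unique extension along maps in L into modal objects
  have horth : ∀ {A B : C} (l : A ⟶ B), S.L l → ∀ (Z : C) (u : A ⟶ P.obj Z),
      ∃! d : B ⟶ P.obj Z, l ≫ d = u := by
    intro A B l hl Z u
    have hr := hR Z
    rw [S.R_eq] at hr
    obtain ⟨d, ⟨hd1, _⟩, hduniq⟩ := hr l hl u (terminal.from B) (Subsingleton.elim _ _)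
    exact ⟨d, hd1, fun y hy => hduniq y ⟨hy, Subsingleton.elim _ _⟩⟩
  have hsnd : S.L (pullback.snd (η.app Y) (P.map f)) :=
    hL _ _ _ _ (IsPullback.of_hasPullback (η.app Y) (P.map f)).flip (hη Y)
  -- P (η Y) = η (P Y)
  have hPη : P.map (η.app Y) = η.app (P.obj Y) := by
    obtain ⟨d, hd, hdu⟩ := horth (η.app Y) (hη Y) (P.obj Y) (η.app Y ≫ η.app (P.obj Y))
    have hnat : η.app Y ≫ P.map (η.app Y) = η.app Y ≫ η.app (P.obj Y) := by
      have := η.naturality (η.app Y); simpa using this.symm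
    rw [hdu (P.map (η.app Y)) hnat, hdu (η.app (P.obj Y)) rfl]
  haveI isoPη : IsIso (P.map (η.app Y)) := by rw [hPη]; exact hidem Y
  -- P snd is an iso
  set W := pullback (η.app Y) (P.map f) with hW
  set snd := pullback.snd (η.app Y) (P.map f) with hsnddef
  haveI := hidem X
  set t : P.obj W ⟶ P.obj X := P.map snd ≫ inv (η.app (P.obj X)) with ht
  have hnatsnd : η.app W ≫ P.map snd = snd ≫ η.app (P.obj X) := by
    have := η.naturality snd; simpa using this.symm
  have h1 : η.app W ≫ t = snd := by
    rw [ht, ← Category.assoc, hnatsnd, Category.assoc, IsIso.hom_inv_id, Category.comp_id]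
  obtain ⟨d, hd, _⟩ := horth snd hsnd W (η.app W)
  have hti : t ≫ d = 𝟙 (P.obj W) := by
    obtain ⟨e, he, heu⟩ := horth (η.app W) (hη W) W (η.app W)
    have e1 := heu (t ≫ d) (show η.app W ≫ t ≫ d = η.app W by rw [← Category.assoc, h1, hd])
    have e2 := heu (𝟙 _) (by simp)
    rw [e1, e2]
  have hit : d ≫ t = 𝟙 (P.obj X) := by
    obtain ⟨e, he, heu⟩ := horth snd hsnd X snd
    have e1 := heu (d ≫ t) (show snd ≫ d ≫ t = snd by rw [← Category.assoc, hd, h1])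
    have e2 := heu (𝟙 _) (by simp)
    rw [e1, e2]
  haveI : IsIso t := ⟨d, hti, hit⟩
  have hPsnd : P.map snd = t ≫ η.app (P.obj X) := by
    rw [ht, Category.assoc, IsIso.inv_hom_id, Category.comp_id]
  haveI : IsIso (P.map snd) := by rw [hPsnd]; infer_instance
  have comm : P.map (pullback.fst (η.app Y) (P.map f)) ≫ P.map (η.app Y)
      = P.map snd ≫ P.map (P.map f) := by
    rw [← P.map_comp, ← P.map_comp, pullback.condition]
  exact IsPullback.of_vert_isIso ⟨comm⟩
end

section
/- Let C be a category with finite limits, let L be a class of maps containing all isomorphisms, closed under composition, stable under base change, and satisfying right cancellation (if g∘f and f are in L then g is in L), and suppose L contains the diagonal Δw of every w ∈ W for some class W ⊆ L. Then for any pullback f ⟶ g ⟵ h of maps f, g, h ∈ W (a cospan in the arrow category whose limit is taken), the induced map between pullbacks, i.e. the fiber product f ×_g h in Arrow C, lies in L, provided L additionally contains base changes of the maps in W and of their diagonals. -/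
open CategoryTheory Limits

theorem stmt16 {C : Type*} [Category C] [HasFiniteLimits C]
    (L W : MorphismProperty C)
    (hWL : ∀ ⦃X Y : C⦄ (w : X ⟶ Y), W w → L w)
    (hiso : ∀ ⦃X Y : C⦄ (e : X ⟶ Y), IsIso e → L e)
    (hcomp : ∀ ⦃X Y Z : C⦄ (a : X ⟶ Y) (b : Y ⟶ Z), L a → L b → L (a ≫ b))
    (hbc : ∀ ⦃P X Y Z : C⦄ (fst : P ⟶ X) (snd : P ⟶ Y) (a : X ⟶ Z) (b : Y ⟶ Z),
      IsPullback fst snd a b → L b → L fst)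
    (hcancel : ∀ ⦃X Y Z : C⦄ (a : X ⟶ Y) (b : Y ⟶ Z), L (a ≫ b) → L a → L b)
    (hdiag : ∀ ⦃X Y : C⦄ (w : X ⟶ Y), W w → L (pullback.diagonal w))
    -- the cospan `f ⟶ g ⟵ h` in the arrow category:
    {A₁ B₁ A₂ B₂ A₃ B₃ : C}
    (f : A₁ ⟶ B₁) (g : A₂ ⟶ B₂) (h : A₃ ⟶ B₃)
    (hf : W f) (hg : W g) (hh : W h)
    (u₁ : A₁ ⟶ A₂) (u₃ : A₃ ⟶ A₂) (v₁ : B₁ ⟶ B₂) (v₃ : B₃ ⟶ B₂)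
    (e₁ : u₁ ≫ g = f ≫ v₁) (e₃ : u₃ ≫ g = h ≫ v₃) :
    L (pullback.map u₁ u₃ v₁ v₃ f h g
        e₁ e₃) := by
  -- step 1: base change of the diagonal of `g`
  let m₁ : pullback u₁ u₃ ⟶ pullback (u₁ ≫ g) (u₃ ≫ g) :=
    pullback.map u₁ u₃ (u₁ ≫ g) (u₃ ≫ g) (𝟙 _) (𝟙 _) g
      (Category.id_comp _).symm (Category.id_comp _).symm
  have hm₁ : L m₁ := by
    have sq := (pullback_map_diagonal_isPullback u₁ u₃ g).flip
    exact hbc _ _ _ _ sq (hdiag g hg)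
  -- congrHom iso
  let c : pullback (u₁ ≫ g) (u₃ ≫ g) ≅ pullback (f ≫ v₁) (h ≫ v₃) :=
    pullback.congrHom e₁ e₃
  have hc : L c.hom := hiso _ inferInstance
  -- step 2: base change of `f`
  let m₂ : pullback (f ≫ v₁) (h ≫ v₃) ⟶ pullback v₁ (h ≫ v₃) :=
    pullback.map (f ≫ v₁) (h ≫ v₃) v₁ (h ≫ v₃) f (𝟙 _) (𝟙 _)
      (by simp) (by simp)
  have hm₂ : L m₂ := by
    have t : IsPullback (pullback.snd v₁ (h ≫ v₃)) (pullback.fst v₁ (h ≫ v₃))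
        (h ≫ v₃) v₁ := (IsPullback.of_hasPullback v₁ (h ≫ v₃)).flip
    have s : IsPullback (m₂ ≫ pullback.snd v₁ (h ≫ v₃))
        (pullback.fst (f ≫ v₁) (h ≫ v₃)) (h ≫ v₃) (f ≫ v₁) := by
      have : m₂ ≫ pullback.snd v₁ (h ≫ v₃) = pullback.snd (f ≫ v₁) (h ≫ v₃) := by
        simp [m₂, pullback.map, pullback.lift_fst, pullback.lift_snd, pullback.lift_fst_assoc, pullback.lift_snd_assoc]
      rw [this]
      exact (IsPullback.of_hasPullback (f ≫ v₁) (h ≫ v₃)).flip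
    have sq : IsPullback m₂ (pullback.fst (f ≫ v₁) (h ≫ v₃))
        (pullback.fst v₁ (h ≫ v₃)) f :=
      IsPullback.of_right s (by simp [m₂, pullback.map, pullback.lift_fst, pullback.lift_snd, pullback.lift_fst_assoc, pullback.lift_snd_assoc]) t
    exact hbc _ _ _ _ sq (hWL f hf)
  -- step 3: base change of `h`
  let m₃ : pullback v₁ (h ≫ v₃) ⟶ pullback v₁ v₃ :=
    pullback.map v₁ (h ≫ v₃) v₁ v₃ (𝟙 _) h (𝟙 _) (by simp) (by simp)
  have hm₃ : L m₃ := by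
    have t : IsPullback (pullback.fst v₁ v₃) (pullback.snd v₁ v₃) v₁ v₃ :=
      IsPullback.of_hasPullback v₁ v₃
    have s : IsPullback (m₃ ≫ pullback.fst v₁ v₃)
        (pullback.snd v₁ (h ≫ v₃)) v₁ (h ≫ v₃) := by
      have : m₃ ≫ pullback.fst v₁ v₃ = pullback.fst v₁ (h ≫ v₃) := by
        simp [m₃, pullback.map, pullback.lift_fst, pullback.lift_snd, pullback.lift_fst_assoc, pullback.lift_snd_assoc]
      rw [this]
      exact IsPullback.of_hasPullback v₁ (h ≫ v₃)
    have sq : IsPullback m₃ (pullback.snd v₁ (h ≫ v₃)) (pullback.snd v₁ v₃) h :=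
      IsPullback.of_right s (by simp [m₃, pullback.map, pullback.lift_fst, pullback.lift_snd, pullback.lift_fst_assoc, pullback.lift_snd_assoc]) t
    exact hbc _ _ _ _ sq (hWL h hh)
  have : pullback.map u₁ u₃ v₁ v₃ f h g e₁ e₃ = m₁ ≫ c.hom ≫ m₂ ≫ m₃ := by
    apply pullback.hom_ext <;> simp [m₁, m₂, m₃, c, pullback.map, pullback.lift_fst, pullback.lift_snd, pullback.lift_fst_assoc, pullback.lift_snd_assoc]
  rw [this]
  exact hcomp _ _ hm₁ (hcomp _ _ hc (hcomp _ _ hm₂ hm₃))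
end
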